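/- (Oversmoothing limit of ridge predictions) Suppose L ∈ ℝ^{n×n} satisfies L^k → 1_n d̄^T as k → ∞ for some vector d̄ ∈ ℝ^n with d̄^T 1_n = 1. Let Z ∈ ℝ^{n×p}, set v = Z^T d̄, and for each k let β̂^{(k)} be the ridge solution on the first n_tr rows of L^k Z with labels Y_tr and parameter λ > 0, and Ŷ_te^{(k)} the predictions on the last n_te rows. Then Ŷ_te^{(k)} → (‖v‖²/(λ + ‖v‖²)) · ȳ_tr · 1_{n_te} as k → ∞, where ȳ_tr is the mean of Y_tr. -/

import Mathlib

open Matrix Filter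

set_option maxHeartbeats 2000000

/-- Oversmoothing limit of ridge predictions: if `L^k → 1ₙ d̄ᵀ` with `d̄ᵀ1ₙ = 1`, then the
ridge predictions on the test rows of the smoothed features `L^k Z` converge to the constant
vector `(‖v‖²/(λ+‖v‖²)) ȳ_tr 1`, where `v = Zᵀ d̄` and `ȳ_tr` is the mean training label. -/
theorem stmt14 {ntr nte p : ℕ} (hntr : 0 < ntr) (lam : ℝ) (hlam : 0 < lam)
    (L : Matrix (Fin (ntr + nte)) (Fin (ntr + nte)) ℝ)
    (db : Fin (ntr + nte) → ℝ) (hdb : ∑ i, db i = 1)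
    (hL : Tendsto (fun k : ℕ => L ^ k) atTop (nhds (Matrix.of fun _ j => db j)))
    (Z : Matrix (Fin (ntr + nte)) (Fin p) ℝ) (Ytr : Fin ntr → ℝ) :
    let v : Fin p → ℝ := Zᵀ *ᵥ db
    let Ztr : ℕ → Matrix (Fin ntr) (Fin p) ℝ := fun k =>
      ((L ^ k) * Z).submatrix (Fin.castAdd nte) id
    let Zte : ℕ → Matrix (Fin nte) (Fin p) ℝ := fun k =>
      ((L ^ k) * Z).submatrix (Fin.natAdd ntr) id
    let βhat : ℕ → (Fin p → ℝ) := fun k =>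
      ((ntr : ℝ)⁻¹ • ((Ztr k)ᵀ * Ztr k) + lam • (1 : Matrix (Fin p) (Fin p) ℝ))⁻¹ *ᵥ
        ((ntr : ℝ)⁻¹ • ((Ztr k)ᵀ *ᵥ Ytr))
    let ybar : ℝ := (ntr : ℝ)⁻¹ * ∑ i, Ytr i
    Tendsto (fun k : ℕ => Zte k *ᵥ βhat k) atTop
      (nhds fun _ : Fin nte =>
        ((∑ j, v j ^ 2) / (lam + ∑ j, v j ^ 2)) * ybar) := by
  intro v Ztr Zte βhat ybar
  have hntr' : (ntr : ℝ) ≠ 0 := Nat.cast_ne_zero.mpr hntr.ne'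
  set Q : ℝ := ∑ j, v j ^ 2 with hQdef
  have hQ0 : (0:ℝ) ≤ Q := Finset.sum_nonneg fun j _ => sq_nonneg _
  have hlQ : lam + Q ≠ 0 := by positivity
  set W : Matrix (Fin p) (Fin p) ℝ := vecMulVec v v with hWdef
  set A0 : Matrix (Fin p) (Fin p) ℝ := W + lam • 1 with hA0def
  set C : Matrix (Fin p) (Fin p) ℝ := lam⁻¹ • (1 - (lam + Q)⁻¹ • W) with hCdef
  -- key algebraic facts
  have hWW : W * W = Q • W := by
    ext i j
    simp only [hWdef, Matrix.mul_apply, vecMulVec_apply, Matrix.smul_apply, smul_eq_mul, hQdef]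
    rw [Finset.sum_mul]
    exact Finset.sum_congr rfl fun k _ => by ring
  have hAW : A0 * W = (Q + lam) • W := by
    rw [hA0def, add_mul, hWW, Matrix.smul_mul, one_mul, add_smul]
  have hAC : A0 * C = 1 := by
    rw [hCdef, Matrix.mul_smul, mul_sub, mul_one, Matrix.mul_smul, hAW, smul_smul]
    rw [show (lam + Q)⁻¹ * (Q + lam) = 1 by rw [add_comm Q lam, inv_mul_cancel₀ hlQ], one_smul]
    have : A0 - W = lam • 1 := by rw [hA0def, add_sub_cancel_left]
    rw [this, smul_smul, inv_mul_cancel₀ hlam.ne', one_smul]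
  have hWv : W *ᵥ v = Q • v := by
    funext i
    simp only [hWdef, Matrix.mulVec, dotProduct, vecMulVec_apply, Pi.smul_apply, smul_eq_mul,
      hQdef]
    rw [Finset.sum_mul]
    exact Finset.sum_congr rfl fun k _ => by ring
  have hCv : C *ᵥ (ybar • v) = (ybar * (lam + Q)⁻¹) • v := by
    rw [hCdef, Matrix.smul_mulVec, Matrix.sub_mulVec, Matrix.one_mulVec,
      Matrix.smul_mulVec, Matrix.mulVec_smul, hWv]
    funext i
    simp only [Pi.smul_apply, Pi.sub_apply, smul_eq_mul]
    field_simp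
    ring
  -- limit objects
  set M0 : Matrix (Fin (ntr + nte)) (Fin (ntr + nte)) ℝ := Matrix.of fun _ j => db j with hM0
  have hM0Z : ∀ (i : Fin (ntr + nte)) (j : Fin p), (M0 * Z) i j = v j := by
    intro i j
    simp only [hM0, Matrix.mul_apply, Matrix.of_apply]
    simp only [v, Matrix.mulVec, dotProduct, Matrix.transpose_apply]
    exact Finset.sum_congr rfl fun m _ => mul_comm _ _
  set Ztr0 : Matrix (Fin ntr) (Fin p) ℝ := Matrix.of fun _ j => v j with hZtr0def
  set Zte0 : Matrix (Fin nte) (Fin p) ℝ := Matrix.of fun _ j => v j with hZte0def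
  have hZtr0 : (M0 * Z).submatrix (Fin.castAdd nte) id = Ztr0 := by
    ext i j; simp [Matrix.submatrix_apply, hM0Z, hZtr0def]
  have hZte0 : (M0 * Z).submatrix (Fin.natAdd ntr) id = Zte0 := by
    ext i j; simp [Matrix.submatrix_apply, hM0Z, hZte0def]
  have hA0eq : (ntr : ℝ)⁻¹ • (Ztr0ᵀ * Ztr0) + lam • (1 : Matrix (Fin p) (Fin p) ℝ) = A0 := by
    ext i j
    simp only [Matrix.add_apply, Matrix.smul_apply, Matrix.mul_apply, Matrix.transpose_apply,
      hZtr0def, Matrix.of_apply, smul_eq_mul, hA0def, hWdef, vecMulVec_apply,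
      Finset.sum_const, Finset.card_univ, Fintype.card_fin, nsmul_eq_mul]
    rw [inv_mul_cancel_left₀ hntr']
  have hb0 : (ntr : ℝ)⁻¹ • (Ztr0ᵀ *ᵥ Ytr) = ybar • v := by
    funext j
    simp only [Pi.smul_apply, Matrix.mulVec, dotProduct, Matrix.transpose_apply, hZtr0def,
      Matrix.of_apply, smul_eq_mul, ybar]
    rw [← Finset.mul_sum]
    ring
  clear_value Q W A0 C M0 Ztr0 Zte0
  -- convergence of the pieces
  have hZtrT : Tendsto Ztr atTop (nhds Ztr0) := by
    have c : Continuous (fun M : Matrix (Fin (ntr + nte)) (Fin (ntr + nte)) ℝ =>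
        (M * Z).submatrix (Fin.castAdd nte) id) :=
      (continuous_id.matrix_mul continuous_const).matrix_submatrix _ _
    have := (c.tendsto M0).comp hL
    rwa [hZtr0] at this
  have hZteT : Tendsto Zte atTop (nhds Zte0) := by
    have c : Continuous (fun M : Matrix (Fin (ntr + nte)) (Fin (ntr + nte)) ℝ =>
        (M * Z).submatrix (Fin.natAdd ntr) id) :=
      (continuous_id.matrix_mul continuous_const).matrix_submatrix _ _
    have := (c.tendsto M0).comp hL
    rwa [hZte0] at this
  have hAk : Tendsto (fun k => (ntr : ℝ)⁻¹ • ((Ztr k)ᵀ * Ztr k)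
      + lam • (1 : Matrix (Fin p) (Fin p) ℝ)) atTop (nhds A0) := by
    have c : Continuous (fun X : Matrix (Fin ntr) (Fin p) ℝ =>
        (ntr : ℝ)⁻¹ • (Xᵀ * X) + lam • (1 : Matrix (Fin p) (Fin p) ℝ)) :=
      by fun_prop
    have := (c.tendsto Ztr0).comp hZtrT
    rwa [hA0eq] at this
  have hbk : Tendsto (fun k => (ntr : ℝ)⁻¹ • ((Ztr k)ᵀ *ᵥ Ytr)) atTop (nhds (ybar • v)) := by
    have c : Continuous (fun X : Matrix (Fin ntr) (Fin p) ℝ =>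
        (ntr : ℝ)⁻¹ • (Xᵀ *ᵥ Ytr)) :=
      by fun_prop
    have := (c.tendsto Ztr0).comp hZtrT
    rwa [hb0] at this
  have hdet : IsUnit A0.det := isUnit_det_of_right_inverse hAC
  have hcinv : ContinuousAt Inv.inv A0 := by
    refine continuousAt_matrix_inv A0 ?_
    rw [Ring.inverse_eq_inv']
    exact continuousAt_inv₀ hdet.ne_zero
  have hInv : Tendsto (fun k => ((ntr : ℝ)⁻¹ • ((Ztr k)ᵀ * Ztr k)
      + lam • (1 : Matrix (Fin p) (Fin p) ℝ))⁻¹) atTop (nhds C) := by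
    have := hcinv.tendsto.comp hAk
    rwa [show A0⁻¹ = C from inv_eq_right_inv hAC] at this
  have hβ : Tendsto βhat atTop (nhds (C *ᵥ (ybar • v))) := by
    have c : Continuous (fun q : Matrix (Fin p) (Fin p) ℝ × (Fin p → ℝ) => q.1 *ᵥ q.2) :=
      continuous_fst.matrix_mulVec continuous_snd
    exact (c.tendsto (C, ybar • v)).comp (hInv.prodMk_nhds hbk)
  clear_value v Ztr Zte βhat ybar
  have hfinal : Tendsto (fun k => Zte k *ᵥ βhat k) atTop
      (nhds (Zte0 *ᵥ (C *ᵥ (ybar • v)))) := by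
    have c : Continuous (fun q : Matrix (Fin nte) (Fin p) ℝ × (Fin p → ℝ) => q.1 *ᵥ q.2) :=
      continuous_fst.matrix_mulVec continuous_snd
    exact (c.tendsto (Zte0, C *ᵥ (ybar • v))).comp (hZteT.prodMk_nhds hβ)
  have hval : Zte0 *ᵥ (C *ᵥ (ybar • v)) =
      fun _ : Fin nte => (Q / (lam + Q)) * ybar := by
    rw [hCv]
    funext i
    simp only [Matrix.mulVec, dotProduct, hZte0def, Matrix.of_apply, Pi.smul_apply,
      smul_eq_mul]
    have : ∑ j, v j * (ybar * (lam + Q)⁻¹ * v j) = (ybar * (lam + Q)⁻¹) * Q := by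
      rw [hQdef, Finset.mul_sum]
      exact Finset.sum_congr rfl fun j _ => by ring
    rw [this]
    field_simp
  rwa [hval] at hfinal
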